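/- (Lemma 1 of the paper.) Let u_max > 0 and α ≥ 1 be real constants, e₁ = (1,0), e₂ = (0,1). Let r, ṙ ∈ ℝ² with r ≠ 0 and set r̂ = r/‖r‖. Suppose that for every (x, y) ∈ {1/α, 1} × {1/α, 1} the inequality ‖ṙ‖ · (x · ⟪e₁, r̂⟫ + y · ⟪e₂, r̂⟫) ≥ ⟪ṙ, r̂⟫ fails (i.e., ‖ṙ‖(x⟪e₁, r̂⟫ + y⟪e₂, r̂⟫) < ⟪ṙ, r̂⟫ for all four corner pairs). Then there is no u ∈ ℝ² satisfying simultaneously: ‖u‖_∞ ≤ u_max, ⟪u, e₁⟫ ≤ −u_max/α, ⟪u, e₂⟫ ≤ −u_max/α, and (‖ṙ‖/u_max) · ⟪u, r̂⟫ + ⟪ṙ, r̂⟫ ≤ 0. -/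

import Mathlib

open scoped RealInnerProductSpace

noncomputable def e1 : EuclideanSpace ℝ (Fin 2) := EuclideanSpace.single 0 1
noncomputable def e2 : EuclideanSpace ℝ (Fin 2) := EuclideanSpace.single 1 1

/-- Infinity norm on ℝ²: `‖u‖_∞ = max (|⟪u, e₁⟫|) (|⟪u, e₂⟫|)`. -/
noncomputable def infNorm (u : EuclideanSpace ℝ (Fin 2)) : ℝ :=
  max |⟪u, e1⟫| |⟪u, e2⟫|

lemma inner_expand (u v : EuclideanSpace ℝ (Fin 2)) :
    ⟪u, v⟫ = ⟪u, e1⟫ * ⟪e1, v⟫ + ⟪u, e2⟫ * ⟪e2, v⟫ := by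
  simp [e1, e2, PiLp.inner_apply, Fin.sum_univ_two, EuclideanSpace.single_apply]; ring

theorem stmt_9 (umax α : ℝ) (humax : 0 < umax) (hα : 1 ≤ α)
    (r rdot : EuclideanSpace ℝ (Fin 2)) (hr : r ≠ 0)
    (hcorner : ∀ x ∈ ({1 / α, 1} : Set ℝ), ∀ y ∈ ({1 / α, 1} : Set ℝ),
      ‖rdot‖ * (x * ⟪e1, ‖r‖⁻¹ • r⟫ + y * ⟪e2, ‖r‖⁻¹ • r⟫)
        < ⟪rdot, ‖r‖⁻¹ • r⟫) :
    ¬ ∃ u : EuclideanSpace ℝ (Fin 2),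
      infNorm u ≤ umax ∧
      ⟪u, e1⟫ ≤ -(umax / α) ∧
      ⟪u, e2⟫ ≤ -(umax / α) ∧
      (‖rdot‖ / umax) * ⟪u, ‖r‖⁻¹ • r⟫ + ⟪rdot, ‖r‖⁻¹ • r⟫ ≤ 0 := by
  rintro ⟨u, hbnd, hw1, hw2, hswarm⟩
  set v : EuclideanSpace ℝ (Fin 2) := ‖r‖⁻¹ • r with hv
  set a := ⟪e1, v⟫ with ha
  set b := ⟪e2, v⟫ with hb
  set c := ⟪rdot, v⟫ with hc
  set n := ‖rdot‖ with hn
  have hn0 : 0 ≤ n := norm_nonneg _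
  have hα0 : 0 < α := lt_of_lt_of_le one_pos hα
  have hmem1 : (1 / α : ℝ) ∈ ({1 / α, 1} : Set ℝ) := Set.mem_insert _ _
  have hmem2 : (1 : ℝ) ∈ ({1 / α, 1} : Set ℝ) := Set.mem_insert_of_mem _ rfl
  have h11 := hcorner (1/α) hmem1 (1/α) hmem1
  have h12 := hcorner (1/α) hmem1 1 hmem2
  have h21 := hcorner 1 hmem2 (1/α) hmem1
  have h22 := hcorner 1 hmem2 1 hmem2
  set u1 := ⟪u, e1⟫ with hu1
  set u2 := ⟪u, e2⟫ with hu2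
  have hb1 : |u1| ≤ umax := le_trans (le_max_left _ _) hbnd
  have hb2 : |u2| ≤ umax := le_trans (le_max_right _ _) hbnd
  have hu1l : -umax ≤ u1 := neg_le_of_abs_le hb1
  have hu2l : -umax ≤ u2 := neg_le_of_abs_le hb2
  have hexp : ⟪u, v⟫ = u1 * a + u2 * b := inner_expand u v
  rw [hexp] at hswarm
  have hcon : n * (u1 * a + u2 * b) + umax * c ≤ 0 := by
    have h := mul_le_mul_of_nonneg_left hswarm humax.le
    have hne : umax ≠ 0 := humax.ne'
    field_simp at h
    linarith [h]
  clear_value a b c n u1 u2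
  clear hcorner hswarm hbnd hb1 hb2 hexp hv hr u r rdot v hn ha hb hc hu1 hu2
  have hS11 := mul_lt_mul_of_pos_left h11 humax
  have hS12 := mul_lt_mul_of_pos_left h12 humax
  have hS21 := mul_lt_mul_of_pos_left h21 humax
  have hS22 := mul_lt_mul_of_pos_left h22 humax
  rcases le_or_gt 0 (n * a) with hna | hna <;> rcases le_or_gt 0 (n * b) with hnb | hnb
  · have k1 := mul_le_mul_of_nonneg_right hu1l hna
    have k2 := mul_le_mul_of_nonneg_right hu2l hnb
    linarith [hS22, hcon, k1, k2]
  · have k1 := mul_le_mul_of_nonneg_right hu1l hna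
    have k2 := mul_le_mul_of_nonpos_right hw2 hnb.le
    ring_nf at hS21 hcon k1 k2; linarith [hS21, hcon, k1, k2]
  · have k1 := mul_le_mul_of_nonpos_right hw1 hna.le
    have k2 := mul_le_mul_of_nonneg_right hu2l hnb
    ring_nf at hS12 hcon k1 k2; linarith [hS12, hcon, k1, k2]
  · have k1 := mul_le_mul_of_nonpos_right hw1 hna.le
    have k2 := mul_le_mul_of_nonpos_right hw2 hnb.le
    ring_nf at hS11 hcon k1 k2; linarith [hS11, hcon, k1, k2]
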